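/- Closed Graph Theorem for PN-spaces: Let (V, ν) and (W, μ) be strongly complete Šerstnev PN-spaces under τ_M, and let T : V → W be a linear operator whose graph is closed, i.e., whenever x_n → x in V and Tx_n → y in W (strong topologies), then y = Tx. Then T is continuous. -/

import Mathlib

open Filter Topology Set

noncomputable section

/-- A distance distribution function: nondecreasing, with values in `[0,1]`,
left-continuous, `F 0 = 0` and `sup F = 1`. -/
def IsDDF (F : ℝ → ℝ) : Prop :=
  Monotone F ∧ (∀ t, F t ∈ Set.Icc (0:ℝ) 1) ∧
  (∀ t : ℝ, Tendsto F (nhdsWithin t (Set.Iio t)) (nhds (F t))) ∧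
  F 0 = 0 ∧ (⨆ t, F t) = 1

/-- A proper d.f.: `F t → 1` as `t → ∞`. -/
def IsProper (F : ℝ → ℝ) : Prop := Tendsto F atTop (nhds 1)

/-- The unit step function at `0`. -/
def H0 : ℝ → ℝ := fun t => if 0 < t then 1 else 0

/-- The quantile function `F̂(w) = sup {t | F t < w}`, valued in `EReal`. -/
noncomputable def qhat (F : ℝ → ℝ) (w : ℝ) : EReal :=
  sSup ((fun t : ℝ => (t : EReal)) '' {t | F t < w})

/-- The triangle function `τ_M(F,G)(x) = sup_{s+t=x} min (F s) (G t)`. -/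
noncomputable def tauM (F G : ℝ → ℝ) : ℝ → ℝ :=
  fun x => ⨆ s : ℝ, min (F s) (G (x - s))

/-- A Šerstnev probabilistic normed space under `τ_M`, with all `ν_x` proper. -/
structure SPN (V : Type*) [AddCommGroup V] [Module ℝ V] where
  nu : V → ℝ → ℝ
  ddf : ∀ x, IsDDF (nu x)
  proper : ∀ x, IsProper (nu x)
  nu_eq_iff : ∀ x, nu x = H0 ↔ x = 0
  nu_add : ∀ x y t, tauM (nu x) (nu y) t ≤ nu (x + y) t
  nu_smul : ∀ a : ℝ, a ≠ 0 → ∀ x t, nu (a • x) t = nu x (t / |a|)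

/-- The quantile seminorm `‖x‖_w = sup {t | ν_x t < w}`. -/
noncomputable def pnorm {V : Type*} [AddCommGroup V] [Module ℝ V]
    (S : SPN V) (x : V) (w : ℝ) : ℝ :=
  sSup {t | S.nu x t < w}

/-- The strong topology of a PN-space, generated by the balls of the seminorms `‖·‖_w`. -/
def strongTop {V : Type*} [AddCommGroup V] [Module ℝ V] (S : SPN V) : TopologicalSpace V :=
  TopologicalSpace.generateFrom
    {U | ∃ (x : V) (w r : ℝ), w ∈ Set.Ioo (0:ℝ) 1 ∧ 0 < r ∧
      U = {y | pnorm S (y - x) w < r}}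

/-- A strong Cauchy sequence. -/
def StrongCauchy {V : Type*} [AddCommGroup V] [Module ℝ V] (S : SPN V) (x : ℕ → V) : Prop :=
  ∀ t : ℝ, 0 < t → ∃ N, ∀ m ≥ N, ∀ n ≥ N, 1 - t < S.nu (x n - x m) t

/-- Strong convergence of a sequence to a point. -/
def StrongLim {V : Type*} [AddCommGroup V] [Module ℝ V] (S : SPN V) (x : ℕ → V) (p : V) : Prop :=
  ∀ t : ℝ, 0 < t → ∃ N, ∀ n ≥ N, 1 - t < S.nu (x n - p) t

/-- Strong completeness: every strong Cauchy sequence strongly converges. -/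
def StrongComplete {V : Type*} [AddCommGroup V] [Module ℝ V] (S : SPN V) : Prop :=
  ∀ x : ℕ → V, StrongCauchy S x → ∃ p, StrongLim S x p

section Aux

variable {V : Type*} [AddCommGroup V] [Module ℝ V] (S : SPN V)

lemma nu_mono (x : V) : Monotone (S.nu x) := (S.ddf x).1

lemma nu_nonneg (x : V) (t : ℝ) : 0 ≤ S.nu x t := ((S.ddf x).2.1 t).1

lemma nu_le_one (x : V) (t : ℝ) : S.nu x t ≤ 1 := ((S.ddf x).2.1 t).2

lemma nu_zero' (x : V) : S.nu x 0 = 0 := (S.ddf x).2.2.2.1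

lemma nu_zero_vec : S.nu 0 = H0 := (S.nu_eq_iff 0).mpr rfl

lemma pnorm_set_nonempty {w : ℝ} (hw : 0 < w) (x : V) :
    {t | S.nu x t < w}.Nonempty :=
  ⟨0, by simpa [nu_zero' S x] using hw⟩

lemma pnorm_set_bdd {w : ℝ} (hw : w < 1) (x : V) :
    BddAbove {t | S.nu x t < w} := by
  have h : ∀ᶠ t in atTop, w < S.nu x t :=
    (S.proper x).eventually (eventually_gt_nhds hw)
  obtain ⟨T0, hT0⟩ := h.exists_forall_of_atTop
  exact ⟨T0, fun t ht => by
    by_contra hlt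
    exact absurd (hT0 t (le_of_not_ge hlt)) (not_lt.2 (le_of_lt ht))⟩

lemma pnorm_nonneg {w : ℝ} (hw : w ∈ Set.Ioo (0:ℝ) 1) (x : V) :
    0 ≤ pnorm S x w :=
  le_csSup (pnorm_set_bdd S hw.2 x) (by simpa [Set.mem_setOf_eq, nu_zero' S x] using hw.1)

lemma pnorm_le_iff {w : ℝ} (hw : w ∈ Set.Ioo (0:ℝ) 1) {x : V} {r : ℝ} :
    pnorm S x w ≤ r ↔ ∀ t, r < t → w ≤ S.nu x t := by
  constructor
  · intro h t hrt
    by_contra hlt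
    have : t ≤ pnorm S x w :=
      le_csSup (pnorm_set_bdd S hw.2 x) (by simpa using lt_of_not_ge hlt)
    exact absurd (lt_of_lt_of_le hrt (this.trans h)) (lt_irrefl r)
  · intro h
    refine csSup_le (pnorm_set_nonempty S hw.1 x) ?_
    intro t ht
    by_contra hrt
    exact absurd (h t (lt_of_not_ge hrt)) (not_le.2 ht)

lemma nu_ge_of_pnorm_lt {w : ℝ} (hw : w ∈ Set.Ioo (0:ℝ) 1) {x : V} {t : ℝ}
    (h : pnorm S x w < t) : w ≤ S.nu x t :=
  (pnorm_le_iff S hw).1 le_rfl t h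

lemma pnorm_le_of_nu_ge {w : ℝ} (hw : w ∈ Set.Ioo (0:ℝ) 1) {x : V} {t : ℝ}
    (h : w ≤ S.nu x t) : pnorm S x w ≤ t :=
  (pnorm_le_iff S hw).2 fun s hs => h.trans (nu_mono S x hs.le)

lemma pnorm_add_le {w : ℝ} (hw : w ∈ Set.Ioo (0:ℝ) 1) (x y : V) :
    pnorm S (x + y) w ≤ pnorm S x w + pnorm S y w := by
  refine (pnorm_le_iff S hw).2 fun t ht => ?_
  set px := pnorm S x w
  set py := pnorm S y w
  set d := (t - px - py) / 2 with hd
  have hdpos : 0 < d := by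
    have : 0 < t - px - py := by linarith
    positivity
  have h1 : w ≤ S.nu x (px + d) :=
    nu_ge_of_pnorm_lt S hw (by linarith)
  have h2 : w ≤ S.nu y (t - (px + d)) := by
    have : py < t - (px + d) := by
      have : t = px + py + 2 * d := by rw [hd]; ring
      linarith
    exact nu_ge_of_pnorm_lt S hw this
  refine le_trans ?_ (S.nu_add x y t)
  have hb : BddAbove (Set.range fun s => min (S.nu x s) (S.nu y (t - s))) :=
    ⟨1, by rintro _ ⟨s, rfl⟩; exact (min_le_left _ _).trans (nu_le_one S x s)⟩
  calc w ≤ min (S.nu x (px + d)) (S.nu y (t - (px + d))) := le_min h1 h2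
    _ ≤ tauM (S.nu x) (S.nu y) t := le_ciSup hb (px + d)

lemma pnorm_smul {w : ℝ} (hw : w ∈ Set.Ioo (0:ℝ) 1) {a : ℝ} (ha : a ≠ 0) (x : V) :
    pnorm S (a • x) w = |a| * pnorm S x w := by
  have hapos : 0 < |a| := abs_pos.2 ha
  have hset : {t | S.nu (a • x) t < w} = {t | S.nu x (t / |a|) < w} := by
    ext t; simp [S.nu_smul a ha x t]
  have hbd : BddAbove {t | S.nu x (t / |a|) < w} := by
    obtain ⟨T0, hT0⟩ := pnorm_set_bdd S hw.2 x
    refine ⟨|a| * T0, fun t ht => ?_⟩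
    have : t / |a| ≤ T0 := hT0 ht
    calc t = |a| * (t / |a|) := by field_simp
      _ ≤ |a| * T0 := by nlinarith
  rw [pnorm, hset]
  apply le_antisymm
  · refine csSup_le ⟨0, by simpa [Set.mem_setOf_eq, nu_zero' S x] using hw.1⟩ ?_
    intro t ht
    have h1 : t / |a| ≤ pnorm S x w := le_csSup (pnorm_set_bdd S hw.2 x) ht
    calc t = |a| * (t / |a|) := by field_simp
      _ ≤ |a| * pnorm S x w := by nlinarith
  · rw [mul_comm, ← le_div_iff₀ hapos]
    refine csSup_le (pnorm_set_nonempty S hw.1 x) ?_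
    intro s hs
    rw [le_div_iff₀ hapos, mul_comm]
    refine le_csSup hbd ?_
    have : |a| * s / |a| = s := by field_simp
    simpa [Set.mem_setOf_eq, this] using hs

lemma pnorm_neg {w : ℝ} (hw : w ∈ Set.Ioo (0:ℝ) 1) (x : V) :
    pnorm S (-x) w = pnorm S x w := by
  have := pnorm_smul S hw (a := -1) (by norm_num) x
  simpa using this

lemma pnorm_zero {w : ℝ} (hw : w ∈ Set.Ioo (0:ℝ) 1) : pnorm S (0 : V) w = 0 := by
  have hset : {t | S.nu (0:V) t < w} = Set.Iic 0 := by
    ext t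
    simp only [nu_zero_vec S, H0, Set.mem_setOf_eq, Set.mem_Iic]
    by_cases ht : 0 < t
    · simp [ht, not_lt.2 hw.2.le, not_le.2 ht]
    · simp [ht, hw.1, le_of_not_gt ht]
  rw [pnorm, hset, csSup_Iic]

lemma pnorm_mono_w {w w' : ℝ} (hw : w ∈ Set.Ioo (0:ℝ) 1) (hw' : w' ∈ Set.Ioo (0:ℝ) 1)
    (hle : w ≤ w') (x : V) : pnorm S x w ≤ pnorm S x w' :=
  csSup_le_csSup (pnorm_set_bdd S hw'.2 x) (pnorm_set_nonempty S hw.1 x)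
    (fun t ht => lt_of_lt_of_le ht hle)

lemma pnorm_sub_comm {w : ℝ} (hw : w ∈ Set.Ioo (0:ℝ) 1) (x y : V) :
    pnorm S (x - y) w = pnorm S (y - x) w := by
  rw [← pnorm_neg S hw (y - x), neg_sub]

lemma strongLim_of_pnorm {x : ℕ → V} {a : V}
    (h : ∀ w ∈ Set.Ioo (0:ℝ) 1, ∀ ε > 0, ∃ N, ∀ n ≥ N, pnorm S (x n - a) w < ε) :
    StrongLim S x a := by
  intro t ht
  set τ := min t 1 with hτdef
  have hτpos : 0 < τ := lt_min ht one_pos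
  have hτle1 : τ ≤ 1 := min_le_right _ _
  have hτlet : τ ≤ t := min_le_left _ _
  have hw : (1 - τ/2) ∈ Set.Ioo (0:ℝ) 1 := by constructor <;> [linarith; linarith]
  obtain ⟨N, hN⟩ := h (1 - τ/2) hw (τ/2) (by linarith)
  refine ⟨N, fun n hn => ?_⟩
  have h1 : pnorm S (x n - a) (1 - τ/2) < t := lt_of_lt_of_le (hN n hn) (by linarith)
  have h2 := nu_ge_of_pnorm_lt S hw h1
  linarith

lemma pnorm_of_strongLim {x : ℕ → V} {a : V} (h : StrongLim S x a)
    {w : ℝ} (hw : w ∈ Set.Ioo (0:ℝ) 1) {ε : ℝ} (hε : 0 < ε) :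
    ∃ N, ∀ n ≥ N, pnorm S (x n - a) w < ε := by
  set t := min (ε/2) ((1-w)/2) with htdef
  have htpos : 0 < t := lt_min (by linarith) (by have := hw.2; linarith)
  obtain ⟨N, hN⟩ := h t htpos
  refine ⟨N, fun n hn => ?_⟩
  have h1 : w ≤ S.nu (x n - a) t := by
    have h2 := hN n hn
    have h3 : t ≤ (1-w)/2 := min_le_right _ _
    linarith
  calc pnorm S (x n - a) w ≤ t := pnorm_le_of_nu_ge S hw h1
    _ < ε := lt_of_le_of_lt (min_le_left _ _) (by linarith)

lemma strongCauchy_of_pnorm {x : ℕ → V}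
    (h : ∀ w ∈ Set.Ioo (0:ℝ) 1, ∀ ε > 0, ∃ N, ∀ m ≥ N, ∀ n ≥ N,
      pnorm S (x n - x m) w < ε) :
    StrongCauchy S x := by
  intro t ht
  set τ := min t 1 with hτdef
  have hτpos : 0 < τ := lt_min ht one_pos
  have hτle1 : τ ≤ 1 := min_le_right _ _
  have hτlet : τ ≤ t := min_le_left _ _
  have hw : (1 - τ/2) ∈ Set.Ioo (0:ℝ) 1 := by constructor <;> [linarith; linarith]
  obtain ⟨N, hN⟩ := h (1 - τ/2) hw (τ/2) (by linarith)
  refine ⟨N, fun m hm n hn => ?_⟩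
  have h1 : pnorm S (x n - x m) (1 - τ/2) < t :=
    lt_of_lt_of_le (hN m hm n hn) (by linarith)
  have h2 := nu_ge_of_pnorm_lt S hw h1
  linarith

/-- Baire category theorem for strongly complete PN-spaces, in terms of seminorm balls. -/
lemma spn_baire (hV : StrongComplete S) (C : ℕ → Set V)
    (hcl : ∀ n x, x ∉ C n → ∃ w ∈ Set.Ioo (0:ℝ) 1, ∃ r > 0,
      ∀ y, pnorm S (y - x) w < r → y ∉ C n)
    (hcov : ∀ x, ∃ n, x ∈ C n) :
    ∃ n x₀, ∃ w ∈ Set.Ioo (0:ℝ) 1, ∃ r > 0,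
      ∀ y, pnorm S (y - x₀) w < r → y ∈ C n := by
  by_contra hcon
  push_neg at hcon
  -- hcon : ∀ n x₀ w ∈ Ioo, ∀ r > 0, ∃ y, pnorm S (y - x₀) w < r ∧ y ∉ C n
  have hctr : ∀ n (x : V) (w : ℝ), w ∈ Set.Ioo (0:ℝ) 1 → ∀ r : ℝ, 0 < r →
      ∃ y, pnorm S (y - x) w < r ∧ y ∉ C n := by
    intro n x w hw r hr
    obtain ⟨y, hy1, hy2⟩ := hcon n x w hw r hr
    exact ⟨y, hy1, hy2⟩
  choose Y hY1 hY2 using hctr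
  choose W1 hW1 R1 hR1 hball using hcl
  -- the recursive construction of nested balls
  let step : ℕ → V × ℝ × ℝ → V × ℝ × ℝ := fun n p =>
    if h : p.2.1 ∈ Set.Ioo (0:ℝ) 1 ∧ 0 < p.2.2 then
      let y := Y n p.1 p.2.1 h.1 (p.2.2/4) (div_pos h.2 (by norm_num))
      let hy : y ∉ C n := hY2 n p.1 p.2.1 h.1 (p.2.2/4) (div_pos h.2 (by norm_num))
      ⟨y, max (W1 n y hy) (max p.2.1 (1 - (2:ℝ)⁻¹^n)),
        min (R1 n y hy) (min (p.2.2/2) ((2:ℝ)⁻¹^n))⟩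
    else p
  let F : ℕ → V × ℝ × ℝ := fun n => Nat.rec ((0:V), (1/2 : ℝ), (1:ℝ)) step n
  have hFs : ∀ n, F (n+1) = step n (F n) := fun n => rfl
  set xs : ℕ → V := fun n => (F n).1 with hxs
  set ws : ℕ → ℝ := fun n => (F n).2.1 with hws
  set rs : ℕ → ℝ := fun n => (F n).2.2 with hrs
  have hInv : ∀ n, ws n ∈ Set.Ioo (0:ℝ) 1 ∧ 0 < rs n := by
    intro n
    induction n with
    | zero =>
      have e1 : ws 0 = 1/2 := rfl
      have e2 : rs 0 = 1 := rfl
      exact ⟨⟨by rw [e1]; norm_num, by rw [e1]; norm_num⟩, by rw [e2]; norm_num⟩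
    | succ n ih =>
      have hr4 : 0 < rs n / 4 := by have := ih.2; positivity
      have h2 : ws (n+1) = max (W1 n _ (hY2 n (xs n) (ws n) ih.1 (rs n/4) hr4))
            (max (ws n) (1 - (2:ℝ)⁻¹^n)) ∧
          rs (n+1) = min (R1 n _ (hY2 n (xs n) (ws n) ih.1 (rs n/4) hr4))
            (min (rs n/2) ((2:ℝ)⁻¹^n)) := by
        constructor <;> simp only [hxs, hws, hrs, hFs n, step, dif_pos (show (F n).2.1 ∈ Set.Ioo (0:ℝ) 1 ∧ 0 < (F n).2.2 from ih)]
      have hpow : (0:ℝ) < (2:ℝ)⁻¹^n := by positivity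
      have hpow1 : (2:ℝ)⁻¹^n ≤ 1 := pow_le_one₀ (by norm_num) (by norm_num)
      have hWIoo := hW1 n (Y n (xs n) (ws n) ih.1 (rs n/4) hr4)
          (hY2 n (xs n) (ws n) ih.1 (rs n/4) hr4)
      have hRpos := hR1 n (Y n (xs n) (ws n) ih.1 (rs n/4) hr4)
          (hY2 n (xs n) (ws n) ih.1 (rs n/4) hr4)
      constructor
      · rw [h2.1]
        constructor
        · exact lt_max_of_lt_right (lt_max_of_lt_left ih.1.1)
        · exact max_lt hWIoo.2 (max_lt ih.1.2 (by linarith))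
      · rw [h2.2]
        exact lt_min hRpos (lt_min (by linarith [ih.2]) hpow)
  have hr4 : ∀ n, 0 < rs n / 4 := fun n => by have := (hInv n).2; positivity
  -- explicit description of the step
  have hstep : ∀ n, ∃ hy : Y n (xs n) (ws n) (hInv n).1 (rs n/4) (hr4 n) ∉ C n,
      xs (n+1) = Y n (xs n) (ws n) (hInv n).1 (rs n/4) (hr4 n) ∧
      ws (n+1) = max (W1 n _ hy) (max (ws n) (1 - (2:ℝ)⁻¹^n)) ∧
      rs (n+1) = min (R1 n _ hy) (min (rs n/2) ((2:ℝ)⁻¹^n)) := by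
    intro n
    refine ⟨hY2 n (xs n) (ws n) (hInv n).1 (rs n/4) (hr4 n), ?_, ?_, ?_⟩ <;>
      simp only [hxs, hws, hrs, hFs n, step, dif_pos (show (F n).2.1 ∈ Set.Ioo (0:ℝ) 1 ∧ 0 < (F n).2.2 from hInv n)]
  have hmove : ∀ n, pnorm S (xs (n+1) - xs n) (ws n) < rs n / 4 := by
    intro n
    obtain ⟨hy, hx, hw, hr⟩ := hstep n
    rw [hx]
    exact hY1 n (xs n) (ws n) (hInv n).1 (rs n/4) (hr4 n)
  have hwmono : ∀ n, ws n ≤ ws (n+1) := by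
    intro n
    obtain ⟨hy, hx, hw, hr⟩ := hstep n
    rw [hw]
    exact le_max_of_le_right (le_max_left _ _)
  have hwlb : ∀ n, 1 - (2:ℝ)⁻¹^n ≤ ws (n+1) := by
    intro n
    obtain ⟨hy, hx, hw, hr⟩ := hstep n
    rw [hw]
    exact le_max_of_le_right (le_max_right _ _)
  have hrhalf : ∀ n, rs (n+1) ≤ rs n / 2 := by
    intro n
    obtain ⟨hy, hx, hw, hr⟩ := hstep n
    rw [hr]
    exact (min_le_right _ _).trans (min_le_left _ _)
  have hrub : ∀ n, rs (n+1) ≤ (2:ℝ)⁻¹^n := by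
    intro n
    obtain ⟨hy, hx, hw, hr⟩ := hstep n
    rw [hr]
    exact (min_le_right _ _).trans (min_le_right _ _)
  have hmiss : ∀ n y, pnorm S (y - xs (n+1)) (ws (n+1)) < rs (n+1) → y ∉ C n := by
    intro n y hball'
    obtain ⟨hy, hx, hw, hr⟩ := hstep n
    rw [hx] at hball'
    refine hball n _ hy y ?_
    have h1 : W1 n _ hy ≤ ws (n+1) := by rw [hw]; exact le_max_left _ _
    calc pnorm S (y - Y n (xs n) (ws n) (hInv n).1 (rs n/4) (hr4 n)) (W1 n _ hy)
        ≤ pnorm S (y - Y n (xs n) (ws n) (hInv n).1 (rs n/4) (hr4 n)) (ws (n+1)) :=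
          pnorm_mono_w S (hW1 n _ hy) (hInv (n+1)).1 h1 _
      _ < rs (n+1) := hball'
      _ ≤ R1 n _ hy := by rw [hr]; exact min_le_left _ _
  have hwmono' : Monotone ws := monotone_nat_of_le_succ hwmono
  have hdrift : ∀ n k, pnorm S (xs (n+k) - xs n) (ws n) ≤ rs n/2 - rs (n+k)/2 := by
    intro n k
    induction k with
    | zero => simp [pnorm_zero S (hInv n).1]
    | succ k ih =>
      have e : xs (n+(k+1)) - xs n = (xs (n+k+1) - xs (n+k)) + (xs (n+k) - xs n) :=
        (sub_add_sub_cancel _ _ _).symm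
      rw [e]
      have h1 : pnorm S (xs (n+k+1) - xs (n+k)) (ws n) < rs (n+k)/4 :=
        lt_of_le_of_lt
          (pnorm_mono_w S (hInv n).1 (hInv (n+k)).1 (hwmono' (Nat.le_add_right n k)) _)
          (hmove (n+k))
      have h2 := pnorm_add_le S (hInv n).1 (xs (n+k+1) - xs (n+k)) (xs (n+k) - xs n)
      have h3 := hrhalf (n+k)
      have : (n+(k+1)) = (n+k)+1 := by ring
      rw [this]
      linarith
  have hdrift' : ∀ n m, n ≤ m → pnorm S (xs m - xs n) (ws n) < rs n / 2 := by
    intro n m hnm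
    obtain ⟨k, rfl⟩ := Nat.exists_eq_add_of_le hnm
    exact lt_of_le_of_lt (hdrift n k) (by linarith [(hInv (n+k)).2])
  have hcauchy : StrongCauchy S xs := by
    refine strongCauchy_of_pnorm S ?_
    intro w hw ε hε
    have hminpos : 0 < min ε (1 - w) := lt_min hε (by linarith [hw.2])
    obtain ⟨n₀, hn₀⟩ := exists_pow_lt_of_lt_one hminpos (by norm_num : (2:ℝ)⁻¹ < 1)
    refine ⟨n₀ + 1, fun m hm n hn => ?_⟩
    have hkey : ∀ i j : ℕ, n₀ + 1 ≤ i → i ≤ j → pnorm S (xs j - xs i) w < ε := by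
      intro i j hi hij
      have hwle : w ≤ ws i := by
        obtain ⟨i', rfl⟩ := Nat.exists_eq_add_of_le hi
        calc w ≤ 1 - (2:ℝ)⁻¹^n₀ := by
              have := (hn₀.trans_le (min_le_right _ _)); linarith
          _ ≤ ws (n₀+1) := hwlb n₀
          _ ≤ ws (n₀+1+i') := hwmono' (Nat.le_add_right (n₀+1) i')
      have hrle : rs i ≤ (2:ℝ)⁻¹^n₀ := by
        obtain ⟨i', rfl⟩ := Nat.exists_eq_add_of_le hi
        calc rs (n₀+1+i') ≤ rs (n₀+1) := by
              refine (antitone_nat_of_succ_le fun k => ?_) (Nat.le_add_right _ _)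
              linarith [hrhalf k, (hInv k).2]
          _ ≤ (2:ℝ)⁻¹^n₀ := hrub n₀
      calc pnorm S (xs j - xs i) w ≤ pnorm S (xs j - xs i) (ws i) :=
            pnorm_mono_w S hw (hInv i).1 hwle _
        _ < rs i / 2 := hdrift' i j hij
        _ < ε := by have := hn₀.trans_le (min_le_left _ _); linarith [(hInv i).2]
    rcases le_total m n with hmn | hnm
    · exact hkey m n hm hmn
    · rw [pnorm_sub_comm S hw]
      exact hkey n m hn hnm
  obtain ⟨p, hp⟩ := hV xs hcauchy
  have hnotin : ∀ n, p ∉ C n := by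
    intro n
    refine hmiss n p ?_
    set w' := ws (n+1)
    set r' := rs (n+1) with hr'
    have hw' := (hInv (n+1)).1
    have hr'pos := (hInv (n+1)).2
    obtain ⟨N', hN'⟩ := pnorm_of_strongLim S hp hw' (show (0:ℝ) < r'/4 by positivity)
    set m := max N' (n+1) with hm
    have e : p - xs (n+1) = (p - xs m) + (xs m - xs (n+1)) := by abel
    rw [e]
    have h1 : pnorm S (p - xs m) w' < r'/4 := by
      rw [pnorm_sub_comm S hw']
      exact hN' m (le_max_left _ _)
    have h2 : pnorm S (xs m - xs (n+1)) w' < r'/2 := hdrift' (n+1) m (le_max_right _ _)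
    have h3 := pnorm_add_le S hw' (p - xs m) (xs m - xs (n+1))
    linarith
  obtain ⟨n, hn⟩ := hcov p
  exact hnotin n hn

end Aux

section DSet

variable {V W : Type*} [AddCommGroup V] [Module ℝ V] [AddCommGroup W] [Module ℝ W]
  (S : SPN V) (S' : SPN W) (T : V →ₗ[ℝ] W)

/-- The set of vectors approximable by vectors with small image seminorm. -/
def Dset (w ε : ℝ) : Set V :=
  {u | ∀ w'' ∈ Set.Ioo (0:ℝ) 1, ∀ r > 0, ∃ v, pnorm S (u - v) w'' < r ∧
    pnorm S' (T v) w ≤ ε}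

lemma Dset_of_bound {w ε : ℝ} {u : V} (h : pnorm S' (T u) w ≤ ε) :
    u ∈ Dset S S' T w ε := by
  intro w'' hw'' r hr
  exact ⟨u, by simpa [pnorm_zero S hw''] using hr, h⟩

lemma Dset_closed {w ε : ℝ} {u : V} (h : u ∉ Dset S S' T w ε) :
    ∃ w₂ ∈ Set.Ioo (0:ℝ) 1, ∃ r₂ > 0,
      ∀ y, pnorm S (y - u) w₂ < r₂ → y ∉ Dset S S' T w ε := by
  simp only [Dset, Set.mem_setOf_eq, not_forall] at h
  obtain ⟨w₂, hw₂, r₂, hr₂, hno⟩ := h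
  push_neg at hno
  refine ⟨w₂, hw₂, r₂/2, by linarith, fun y hy hmem => ?_⟩
  obtain ⟨v, hv1, hv2⟩ := hmem w₂ hw₂ (r₂/2) (by linarith)
  obtain h' := hno v
  have : pnorm S (u - v) w₂ < r₂ := by
    have e : u - v = -(y - u) + (y - v) := by abel
    rw [e]
    have := pnorm_add_le S hw₂ (-(y - u)) (y - v)
    rw [pnorm_neg S hw₂] at this
    linarith
  exact absurd hv2 (not_le.2 (h' this))

lemma Dset_add {w ε₁ ε₂ : ℝ} (hw : w ∈ Set.Ioo (0:ℝ) 1) {u₁ u₂ : V}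
    (h₁ : u₁ ∈ Dset S S' T w ε₁) (h₂ : u₂ ∈ Dset S S' T w ε₂) :
    u₁ + u₂ ∈ Dset S S' T w (ε₁ + ε₂) := by
  intro w'' hw'' r hr
  obtain ⟨v₁, hv₁, hv₁'⟩ := h₁ w'' hw'' (r/2) (by linarith)
  obtain ⟨v₂, hv₂, hv₂'⟩ := h₂ w'' hw'' (r/2) (by linarith)
  refine ⟨v₁ + v₂, ?_, ?_⟩
  · have e : u₁ + u₂ - (v₁ + v₂) = (u₁ - v₁) + (u₂ - v₂) := by abel
    rw [e]
    have := pnorm_add_le S hw'' (u₁ - v₁) (u₂ - v₂)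
    linarith
  · rw [map_add]
    have := pnorm_add_le S' hw (T v₁) (T v₂)
    linarith

lemma Dset_smul {w ε : ℝ} (hw : w ∈ Set.Ioo (0:ℝ) 1) {c : ℝ} (hc : c ≠ 0) {u : V}
    (h : u ∈ Dset S S' T w ε) : c • u ∈ Dset S S' T w (|c| * ε) := by
  intro w'' hw'' r hr
  have hcpos : 0 < |c| := abs_pos.2 hc
  obtain ⟨v, hv, hv'⟩ := h w'' hw'' (r/|c|) (by positivity)
  refine ⟨c • v, ?_, ?_⟩
  · have e : c • u - c • v = c • (u - v) := by rw [smul_sub]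
    rw [e, pnorm_smul S hw'' hc]
    calc |c| * pnorm S (u - v) w'' < |c| * (r/|c|) := by
          exact (mul_lt_mul_iff_right₀ hcpos).2 hv
      _ = r := by field_simp
  · rw [map_smul, pnorm_smul S' hw hc]
    exact mul_le_mul_of_nonneg_left hv' hcpos.le

lemma Dset_neg {w ε : ℝ} (hw : w ∈ Set.Ioo (0:ℝ) 1) {u : V}
    (h : u ∈ Dset S S' T w ε) : -u ∈ Dset S S' T w ε := by
  have := Dset_smul S S' T hw (c := -1) (by norm_num) h
  simpa using this

/-- The key Baire-category consequence: every `Dset` absorbs a seminorm ball. -/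
lemma Dset_ball (hV : StrongComplete S) {w : ℝ} (hw : w ∈ Set.Ioo (0:ℝ) 1)
    {ε : ℝ} (hε : 0 < ε) :
    ∃ w' ∈ Set.Ioo (0:ℝ) 1, ∃ δ > 0, ∀ u, pnorm S u w' < δ →
      u ∈ Dset S S' T w ε := by
  obtain ⟨n, x₀, w₀, hw₀, r₀, hr₀, hball⟩ :=
    spn_baire S hV (fun n => Dset S S' T w (n+1))
      (fun n x hx => Dset_closed S S' T hx)
      (by
        intro x
        obtain ⟨n, hn⟩ := exists_nat_ge (pnorm S' (T x) w)
        exact ⟨n, Dset_of_bound S S' T (hn.trans (by linarith))⟩)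
  -- symmetrize: the ball at the origin is absorbed
  have hzero : ∀ u, pnorm S u w₀ < r₀ → u ∈ Dset S S' T w ((n:ℝ)+1) := by
    intro u hu
    have ha : x₀ + u ∈ Dset S S' T w ((n:ℝ)+1) := by
      refine hball _ ?_
      simpa using hu
    have hb : x₀ - u ∈ Dset S S' T w ((n:ℝ)+1) := by
      refine hball _ ?_
      have e : x₀ - u - x₀ = -u := by abel
      rwa [e, pnorm_neg S hw₀]
    have hnb := Dset_neg S S' T hw hb
    have hsum := Dset_add S S' T hw ha hnb
    have e : x₀ + u + -(x₀ - u) = (2:ℝ) • u := by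
      rw [two_smul]; abel
    rw [e] at hsum
    have := Dset_smul S S' T hw (c := (2:ℝ)⁻¹) (by norm_num) hsum
    have e2 : (2:ℝ)⁻¹ • (2:ℝ) • u = u := by
      rw [smul_smul]; norm_num
    rw [e2] at this
    have e3 : |(2:ℝ)⁻¹| * ((n:ℝ) + 1 + ((n:ℝ)+1)) = (n:ℝ)+1 := by
      rw [abs_of_pos (by norm_num : (0:ℝ) < 2⁻¹)]; ring
    rwa [e3] at this
  -- rescale
  have hn1 : (0:ℝ) < (n:ℝ) + 1 := by positivity
  refine ⟨w₀, hw₀, r₀ * ε / ((n:ℝ)+1), by positivity, fun u hu => ?_⟩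
  set c := ((n:ℝ)+1)/ε with hc
  have hcpos : 0 < c := by positivity
  have h1 : pnorm S (c • u) w₀ < r₀ := by
    rw [pnorm_smul S hw₀ (ne_of_gt hcpos), abs_of_pos hcpos]
    calc c * pnorm S u w₀ < c * (r₀ * ε / ((n:ℝ)+1)) :=
          (mul_lt_mul_iff_right₀ hcpos).2 hu
      _ = r₀ := by rw [hc]; field_simp
  have h2 := hzero _ h1
  have h3 := Dset_smul S S' T hw (c := c⁻¹) (ne_of_gt (inv_pos.2 hcpos)) h2
  have e2 : c⁻¹ • c • u = u := by
    rw [smul_smul, inv_mul_cancel₀ (ne_of_gt hcpos), one_smul]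
  have e3 : |c⁻¹| * ((n:ℝ)+1) = ε := by
    rw [abs_of_pos (inv_pos.2 hcpos), hc]
    field_simp
  rwa [e2, e3] at h3

/-- The main quantitative estimate: a closed-graph operator maps a small ball into
a bounded set for each target seminorm. -/
lemma key_estimate (hV : StrongComplete S) (hW : StrongComplete S')
    (hclosed : ∀ (x : ℕ → V) (a : V) (b : W),
      StrongLim S x a → StrongLim S' (fun n => T (x n)) b → b = T a)
    {w : ℝ} (hw : w ∈ Set.Ioo (0:ℝ) 1) :
    ∃ w' ∈ Set.Ioo (0:ℝ) 1, ∃ δ > 0, ∀ u, pnorm S u w' < δ →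
      pnorm S' (T u) w ≤ 2 := by
  classical
  -- the increasing family of target seminorm levels
  set wh : ℕ → ℝ := fun j => max w (1 - (2:ℝ)⁻¹^(j+2)) with hwh
  have hpow : ∀ j : ℕ, (0:ℝ) < (2:ℝ)⁻¹^j := fun j => by positivity
  have hpow1 : ∀ j : ℕ, (2:ℝ)⁻¹^j ≤ 1 := fun j => pow_le_one₀ (by norm_num) (by norm_num)
  have hpowmono : ∀ {i j : ℕ}, i ≤ j → (2:ℝ)⁻¹^j ≤ (2:ℝ)⁻¹^i := fun hij =>
    pow_le_pow_of_le_one (by norm_num) (by norm_num) hij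
  have hwhIoo : ∀ j, wh j ∈ Set.Ioo (0:ℝ) 1 := by
    intro j
    constructor
    · exact lt_max_of_lt_left hw.1
    · exact max_lt hw.2 (by linarith [hpow (j+2)])
  have hwhmono : Monotone wh := by
    intro i j hij
    exact max_le_max le_rfl (by linarith [hpowmono (by omega : i+2 ≤ j+2)])
  have hwle : ∀ j, w ≤ wh j := fun j => le_max_left _ _
  have hwhlb : ∀ j, 1 - (2:ℝ)⁻¹^(j+2) ≤ wh j := fun j => le_max_right _ _
  -- Baire data for each level
  have hDB := fun j => Dset_ball S S' T hV (hwhIoo j) (hpow (j+1))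
  choose w' hw' δ hδ hD using hDB
  refine ⟨w' 0, hw' 0, δ 0, hδ 0, fun u hu => ?_⟩
  -- the approximation parameters at step j
  set w₂ : ℕ → ℝ := fun j => max (w' (j+1)) (1 - (2:ℝ)⁻¹^(j+2)) with hw₂def
  have hw₂Ioo : ∀ j, w₂ j ∈ Set.Ioo (0:ℝ) 1 := by
    intro j
    exact ⟨lt_max_of_lt_left (hw' (j+1)).1,
      max_lt (hw' (j+1)).2 (by linarith [hpow (j+2)])⟩
  set r₂ : ℕ → ℝ := fun j => min (δ (j+1)) ((2:ℝ)⁻¹^(j+1)) with hr₂def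
  have hr₂pos : ∀ j, 0 < r₂ j := fun j => lt_min (hδ (j+1)) (hpow (j+1))
  -- the residual sequence
  set A : ℕ → V → V := fun j x =>
    if h : x ∈ Dset S S' T (wh j) ((2:ℝ)⁻¹^(j+1)) then
      Classical.choose (h (w₂ j) (hw₂Ioo j) (r₂ j) (hr₂pos j))
    else 0 with hA
  set g : ℕ → V := fun n => Nat.rec u (fun j x => x - A j x) n with hg
  have hgs : ∀ j, g (j+1) = g j - A j (g j) := fun j => rfl
  have hg0 : g 0 = u := rfl
  have hgD : ∀ j, g j ∈ Dset S S' T (wh j) ((2:ℝ)⁻¹^(j+1)) := by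
    intro j
    induction j with
    | zero => exact hD 0 u hu
    | succ j ih =>
      have hspec := Classical.choose_spec (ih (w₂ j) (hw₂Ioo j) (r₂ j) (hr₂pos j))
      have hAe : A j (g j) = Classical.choose (ih (w₂ j) (hw₂Ioo j) (r₂ j) (hr₂pos j)) := by
        simp only [hA, dif_pos ih]
      refine hD (j+1) (g (j+1)) ?_
      have h1 : pnorm S (g (j+1)) (w₂ j) < r₂ j := by
        rw [hgs j, hAe]
        exact hspec.1
      calc pnorm S (g (j+1)) (w' (j+1)) ≤ pnorm S (g (j+1)) (w₂ j) :=
            pnorm_mono_w S (hw' (j+1)) (hw₂Ioo j) (le_max_left _ _) _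
        _ < r₂ j := h1
        _ ≤ δ (j+1) := min_le_left _ _
  -- the two basic estimates on the construction
  have hres : ∀ j, pnorm S (g (j+1)) (w₂ j) < r₂ j := by
    intro j
    have hspec := Classical.choose_spec ((hgD j) (w₂ j) (hw₂Ioo j) (r₂ j) (hr₂pos j))
    have hAe : A j (g j) = Classical.choose ((hgD j) (w₂ j) (hw₂Ioo j) (r₂ j) (hr₂pos j)) := by
      simp only [hA, dif_pos (hgD j)]
    rw [hgs j, hAe]
    exact hspec.1
  have himg : ∀ j, pnorm S' (T (g j - g (j+1))) (wh j) ≤ (2:ℝ)⁻¹^(j+1) := by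
    intro j
    have hspec := Classical.choose_spec ((hgD j) (w₂ j) (hw₂Ioo j) (r₂ j) (hr₂pos j))
    have hAe : A j (g j) = Classical.choose ((hgD j) (w₂ j) (hw₂Ioo j) (r₂ j) (hr₂pos j)) := by
      simp only [hA, dif_pos (hgD j)]
    have e : g j - g (j+1) = A j (g j) := by rw [hgs j]; abel
    rw [e, hAe]
    exact hspec.2
  -- telescoping bound in W
  have htel : ∀ n k, pnorm S' (T (g n) - T (g (n+k))) (wh n) ≤
      (2:ℝ)⁻¹^n - (2:ℝ)⁻¹^(n+k) := by
    intro n k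
    induction k with
    | zero => simp [pnorm_zero S' (hwhIoo n)]
    | succ k ih =>
      have e : T (g n) - T (g (n+(k+1))) =
          (T (g n) - T (g (n+k))) + (T (g (n+k)) - T (g (n+k+1))) := by
        have : n+(k+1) = n+k+1 := by ring
        rw [this]; abel
      rw [e]
      have h1 : pnorm S' (T (g (n+k)) - T (g (n+k+1))) (wh n) ≤ (2:ℝ)⁻¹^(n+k+1) := by
        calc pnorm S' (T (g (n+k)) - T (g (n+k+1))) (wh n)
            ≤ pnorm S' (T (g (n+k)) - T (g (n+k+1))) (wh (n+k)) :=
              pnorm_mono_w S' (hwhIoo n) (hwhIoo (n+k)) (hwhmono (Nat.le_add_right n k)) _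
          _ ≤ (2:ℝ)⁻¹^(n+k+1) := by rw [← map_sub]; exact himg (n+k)
      have h2 := pnorm_add_le S' (hwhIoo n) (T (g n) - T (g (n+k))) (T (g (n+k)) - T (g (n+k+1)))
      have h3 : (2:ℝ)⁻¹^(n+(k+1)) = (2:ℝ)⁻¹^(n+k+1) := by norm_num [show n+(k+1) = n+k+1 from by ring]
      have h4 : (2:ℝ)⁻¹^(n+k) = 2 * (2:ℝ)⁻¹^(n+k+1) := by rw [pow_succ]; ring
      rw [h3]
      linarith
  have htel' : ∀ n m, n ≤ m → pnorm S' (T (g n) - T (g m)) (wh n) ≤ (2:ℝ)⁻¹^n := by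
    intro n m hnm
    obtain ⟨k, rfl⟩ := Nat.exists_eq_add_of_le hnm
    exact (htel n k).trans (by linarith [hpow (n+k)])
  -- the partial sums
  set s : ℕ → V := fun n => u - g n with hs
  have hTcauchy : StrongCauchy S' (fun n => T (s n)) := by
    refine strongCauchy_of_pnorm S' ?_
    intro ω hω ε' hε'
    have hminpos : 0 < min ε' (1 - ω) := lt_min hε' (by linarith [hω.2])
    obtain ⟨N₀, hN₀⟩ := exists_pow_lt_of_lt_one hminpos (by norm_num : (2:ℝ)⁻¹ < 1)
    refine ⟨N₀, fun m hm n hn => ?_⟩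
    have hωle : ∀ i, N₀ ≤ i → ω ≤ wh i := by
      intro i hi
      have h1 : (2:ℝ)⁻¹^(i+2) ≤ (2:ℝ)⁻¹^N₀ := hpowmono (by omega)
      have h2 : (2:ℝ)⁻¹^N₀ < 1 - ω := hN₀.trans_le (min_le_right _ _)
      calc ω ≤ 1 - (2:ℝ)⁻¹^(i+2) := by linarith
        _ ≤ wh i := hwhlb i
    have hkey : ∀ i j, N₀ ≤ i → i ≤ j → pnorm S' (T (s j) - T (s i)) ω < ε' := by
      intro i j hi hij
      have e : T (s j) - T (s i) = T (g i) - T (g j) := by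
        simp only [hs, map_sub]; abel
      rw [e]
      calc pnorm S' (T (g i) - T (g j)) ω ≤ pnorm S' (T (g i) - T (g j)) (wh i) :=
            pnorm_mono_w S' hω (hwhIoo i) (hωle i hi) _
        _ ≤ (2:ℝ)⁻¹^i := htel' i j hij
        _ ≤ (2:ℝ)⁻¹^N₀ := hpowmono hi
        _ < ε' := hN₀.trans_le (min_le_left _ _)
    rcases le_total m n with hmn | hnm
    · exact hkey m n hm hmn
    · rw [pnorm_sub_comm S' hω]
      exact hkey n m hn hnm
  obtain ⟨y, hy⟩ := hW _ hTcauchy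
  have hsu : StrongLim S s u := by
    refine strongLim_of_pnorm S ?_
    intro ω hω ε' hε'
    have hminpos : 0 < min ε' (1 - ω) := lt_min hε' (by linarith [hω.2])
    obtain ⟨N₀, hN₀⟩ := exists_pow_lt_of_lt_one hminpos (by norm_num : (2:ℝ)⁻¹ < 1)
    refine ⟨N₀ + 1, fun n hn => ?_⟩
    obtain ⟨j, rfl⟩ := Nat.exists_eq_add_of_le hn
    have e : s (N₀+1+j) - u = -(g (N₀+1+j)) := by simp [hs]
    rw [e, pnorm_neg S hω]
    have h2 : (2:ℝ)⁻¹^N₀ < 1 - ω := hN₀.trans_le (min_le_right _ _)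
    have ej : N₀+1+j = (N₀+j)+1 := by ring
    rw [ej]
    have hωle : ω ≤ w₂ (N₀+j) := by
      have h1 : (2:ℝ)⁻¹^(N₀+j+2) ≤ (2:ℝ)⁻¹^N₀ := hpowmono (by omega)
      calc ω ≤ 1 - (2:ℝ)⁻¹^(N₀+j+2) := by linarith
        _ ≤ w₂ (N₀+j) := le_max_right _ _
    calc pnorm S (g ((N₀+j)+1)) ω ≤ pnorm S (g ((N₀+j)+1)) (w₂ (N₀+j)) :=
          pnorm_mono_w S hω (hw₂Ioo (N₀+j)) hωle _
      _ < r₂ (N₀+j) := hres (N₀+j)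
      _ ≤ (2:ℝ)⁻¹^(N₀+j+1) := min_le_right _ _
      _ ≤ (2:ℝ)⁻¹^N₀ := hpowmono (by omega)
      _ < ε' := hN₀.trans_le (min_le_left _ _)
  have hyTu : y = T u := hclosed s u y hsu hy
  rw [hyTu] at hy
  -- final bound
  obtain ⟨N, hN⟩ := pnorm_of_strongLim S' hy hw (show (0:ℝ) < 1 by norm_num)
  have h1 : pnorm S' (T u - T (s N)) w < 1 := by
    rw [pnorm_sub_comm S' hw]
    exact hN N le_rfl
  have h2 : pnorm S' (T (s N)) w ≤ 1 := by
    have e : T (s N) = T (g 0) - T (g N) := by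
      simp only [hs, map_sub, hg0]
    rw [e]
    calc pnorm S' (T (g 0) - T (g N)) w ≤ pnorm S' (T (g 0) - T (g N)) (wh 0) :=
          pnorm_mono_w S' hw (hwhIoo 0) (hwle 0) _
      _ ≤ (2:ℝ)⁻¹^0 := htel' 0 N (Nat.zero_le N)
      _ = 1 := by norm_num
  have e : T u = (T u - T (s N)) + T (s N) := by abel
  rw [e]
  have := pnorm_add_le S' hw (T u - T (s N)) (T (s N))
  linarith

end DSet

/-- Closed Graph Theorem for PN-spaces: a linear operator between strongly complete
Šerstnev PN-spaces whose graph is (sequentially) closed is continuous. -/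
theorem spn_closed_graph {V W : Type*} [AddCommGroup V] [Module ℝ V]
    [AddCommGroup W] [Module ℝ W]
    (S : SPN V) (S' : SPN W) (hV : StrongComplete S) (hW : StrongComplete S')
    (T : V →ₗ[ℝ] W)
    (hclosed : ∀ (x : ℕ → V) (a : V) (b : W),
      StrongLim S x a → StrongLim S' (fun n => T (x n)) b → b = T a) :
    @Continuous V W (strongTop S) (strongTop S') T := by
  have hopen : ∀ U : Set V, (∀ x ∈ U, ∃ w ∈ Set.Ioo (0:ℝ) 1, ∃ r > 0,
      ∀ y, pnorm S (y - x) w < r → y ∈ U) → IsOpen[strongTop S] U := by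
    letI := strongTop S
    intro U h
    have hU : U = ⋃₀ {B | (∃ (x : V) (w r : ℝ), w ∈ Set.Ioo (0:ℝ) 1 ∧ 0 < r ∧
        B = {y | pnorm S (y - x) w < r}) ∧ B ⊆ U} := by
      apply subset_antisymm
      · intro x hx
        obtain ⟨w, hw, r, hr, hball⟩ := h x hx
        refine ⟨{y | pnorm S (y - x) w < r}, ⟨⟨x, w, r, hw, hr, rfl⟩, fun y hy => hball y hy⟩, ?_⟩
        simp only [Set.mem_setOf_eq, sub_self, pnorm_zero S hw]
        exact hr
      · intro x hx
        obtain ⟨B, ⟨_, hBU⟩, hxB⟩ := hx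
        exact hBU hxB
    rw [hU]
    exact isOpen_sUnion fun B hB => TopologicalSpace.isOpen_generateFrom_of_mem hB.1
  rw [show strongTop S' = TopologicalSpace.generateFrom
      {U | ∃ (x : W) (w r : ℝ), w ∈ Set.Ioo (0:ℝ) 1 ∧ 0 < r ∧
        U = {y | pnorm S' (y - x) w < r}} from rfl]
  rw [continuous_generateFrom_iff]
  rintro s ⟨x₀, w, r, hw, hr, rfl⟩
  refine hopen _ ?_
  rintro v hv
  simp only [Set.mem_preimage, Set.mem_setOf_eq] at hv
  set ε := r - pnorm S' (T v - x₀) w with hε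
  have hεpos : 0 < ε := by simp only [hε]; linarith
  obtain ⟨w', hw', δ, hδ, hbound⟩ := key_estimate S S' T hV hW hclosed hw
  refine ⟨w', hw', δ * (ε/4), by positivity, fun y hy => ?_⟩
  simp only [Set.mem_preimage, Set.mem_setOf_eq]
  have hkey : pnorm S' (T (y - v)) w ≤ ε/2 := by
    have hcpos : 0 < ε/4 := by positivity
    have hcne : (ε/4) ≠ 0 := ne_of_gt hcpos
    have h1 : pnorm S ((ε/4)⁻¹ • (y - v)) w' < δ := by
      rw [pnorm_smul S hw' (inv_ne_zero hcne), abs_of_pos (inv_pos.2 hcpos)]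
      calc (ε/4)⁻¹ * pnorm S (y - v) w' < (ε/4)⁻¹ * (δ * (ε/4)) :=
            (mul_lt_mul_iff_right₀ (inv_pos.2 hcpos)).2 hy
        _ = δ := by field_simp
    have h2 := hbound _ h1
    have e : T (y - v) = (ε/4) • T ((ε/4)⁻¹ • (y - v)) := by
      rw [map_smul, smul_smul, mul_inv_cancel₀ hcne, one_smul]
    rw [e, pnorm_smul S' hw hcne, abs_of_pos hcpos]
    calc (ε/4) * pnorm S' (T ((ε/4)⁻¹ • (y - v))) w ≤ (ε/4) * 2 :=
          mul_le_mul_of_nonneg_left h2 hcpos.le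
      _ = ε/2 := by ring
  have e : T y - x₀ = T (y - v) + (T v - x₀) := by
    rw [map_sub]; abel
  have h3 : pnorm S' (T y - x₀) w ≤ pnorm S' (T (y - v)) w + pnorm S' (T v - x₀) w := by
    rw [e]; exact pnorm_add_le S' hw _ _
  have h4 : pnorm S' (T v - x₀) w = r - ε := by rw [hε]; ring
  linarith
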